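/- With ε₊, ε₋ as above (0 < ε ≤ 1/2, integers 1 ≤ a ≤ q), one has |ε₊(q,a) - ε√(1 + a²/q²)| ≤ C ε²/q and |ε₋(q,a) - ε√(1 + a²/q²)| ≤ C ε²/q for some absolute constant C. Equivalently, ε₊(q,a) = ε/cos(arctan(a/q)) + O(ε²/q). -/

import Mathlib

set_option maxHeartbeats 2000000


theorem tangent_half_widths_asymptotics :
    ∃ C : ℝ, 0 < C ∧
      ∀ (ε : ℝ) (q a : ℕ), 0 < ε → ε ≤ 1 / 2 → 1 ≤ a → a ≤ q →
        |(a * ε ^ 2 / ((q : ℝ) ^ 2 - ε ^ 2) +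
            ε / ((q : ℝ) ^ 2 - ε ^ 2) *
              Real.sqrt ((q : ℝ) ^ 4 + (a : ℝ) ^ 2 * q ^ 2 - (a : ℝ) ^ 2 * ε ^ 2)) -
          ε * Real.sqrt (1 + (a : ℝ) ^ 2 / (q : ℝ) ^ 2)| ≤ C * ε ^ 2 / q ∧
        |(-(a * ε ^ 2) / ((q : ℝ) ^ 2 - ε ^ 2) +
            ε / ((q : ℝ) ^ 2 - ε ^ 2) *
              Real.sqrt ((q : ℝ) ^ 4 + (a : ℝ) ^ 2 * q ^ 2 - (a : ℝ) ^ 2 * ε ^ 2)) -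
          ε * Real.sqrt (1 + (a : ℝ) ^ 2 / (q : ℝ) ^ 2)| ≤ C * ε ^ 2 / q := by
  refine ⟨10, by norm_num, ?_⟩
  intro ε q a hε hε2 ha haq
  have ha1 : (1:ℝ) ≤ a := by exact_mod_cast ha
  have haq' : (a:ℝ) ≤ q := by exact_mod_cast haq
  have hq1 : (1:ℝ) ≤ q := le_trans ha1 haq'
  have hq0 : (0:ℝ) < q := by linarith
  have ha0 : (0:ℝ) < a := by linarith
  have hεq : ε ≤ (q:ℝ) := by linarith
  have hε4 : ε^2 ≤ 1/4 := by nlinarith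
  have hεq2 : ε^2 ≤ (q:ℝ)^2 := by nlinarith
  have hAq2 : (a:ℝ)^2 ≤ (q:ℝ)^2 := by nlinarith
  have hAQ : (a:ℝ)^2*(q:ℝ)^2 ≤ (q:ℝ)^4 := by
    nlinarith [mul_le_mul_of_nonneg_right hAq2 (by positivity : (0:ℝ) ≤ (q:ℝ)^2)]
  have hAE : (a:ℝ)^2*ε^2 ≤ (q:ℝ)^2*ε^2 := by
    nlinarith [mul_le_mul_of_nonneg_right hAq2 (by positivity : (0:ℝ) ≤ ε^2)]
  have hAEQ : (a:ℝ)^2*ε^2 ≤ (a:ℝ)^2*(q:ℝ)^2 := by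
    nlinarith [mul_le_mul_of_nonneg_left hεq2 (by positivity : (0:ℝ) ≤ (a:ℝ)^2)]
  have hrad : (0:ℝ) ≤ (q:ℝ)^4 + (a:ℝ)^2 * (q:ℝ)^2 - (a:ℝ)^2 * ε^2 := by
    nlinarith [hAEQ]
  set S := Real.sqrt ((q:ℝ)^4 + (a:ℝ)^2 * (q:ℝ)^2 - (a:ℝ)^2 * ε^2) with hSdef
  have hSnn : 0 ≤ S := Real.sqrt_nonneg _
  have hSsq : S^2 = (q:ℝ)^4 + (a:ℝ)^2*(q:ℝ)^2 - (a:ℝ)^2*ε^2 := Real.sq_sqrt hrad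
  set T := Real.sqrt ((q:ℝ)^4 + (a:ℝ)^2 * (q:ℝ)^2) with hTdef
  have hTnn : 0 ≤ T := Real.sqrt_nonneg _
  have hTsq : T^2 = (q:ℝ)^4 + (a:ℝ)^2*(q:ℝ)^2 := Real.sq_sqrt (by positivity)
  have hsqrt : Real.sqrt (1 + (a:ℝ)^2/(q:ℝ)^2) = T / (q:ℝ)^2 := by
    rw [show (1:ℝ) + (a:ℝ)^2/(q:ℝ)^2 = ((q:ℝ)^4 + (a:ℝ)^2*(q:ℝ)^2)/((q:ℝ)^2)^2 by
      field_simp, Real.sqrt_div (by positivity), Real.sqrt_sq (by positivity)]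
  have hq2 : (1:ℝ) ≤ (q:ℝ)^2 := by nlinarith
  have hD : (3/4)*(q:ℝ)^2 ≤ (q:ℝ)^2 - ε^2 := by linarith
  have hDpos : (0:ℝ) < (q:ℝ)^2 - ε^2 := by nlinarith [hq2, hε4]
  have hSge : (q:ℝ)^2 ≤ S := by
    nlinarith [hSsq, hSnn, hAEQ, sq_nonneg (S - (q:ℝ)^2), mul_pos hq0 hq0]
  have hTge : (q:ℝ)^2 ≤ T := by
    nlinarith [hTsq, hTnn, sq_nonneg (T - (q:ℝ)^2), mul_pos hq0 hq0]
  have hTle : T ≤ 2*(q:ℝ)^2 := by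
    nlinarith [hTsq, hTnn, hAQ, sq_nonneg (T - 2*(q:ℝ)^2), mul_pos hq0 hq0]
  have hST : S ≤ T := by nlinarith [hSsq, hTsq, hSnn, hTnn]
  have hprod : (T - S)*(T + S) = (a:ℝ)^2*ε^2 := by nlinarith [hSsq, hTsq]
  have hsum : 2*(q:ℝ)^2 ≤ T + S := by linarith
  have h5 : (T - S) * (2*(q:ℝ)^2) ≤ (q:ℝ)^2 * ε^2 := by
    nlinarith [mul_le_mul_of_nonneg_left hsum (sub_nonneg.2 hST), hAE]
  have hTS : T - S ≤ ε^2 := by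
    nlinarith [h5, mul_pos hq0 hq0]
  have hT3 : (0:ℝ) ≤ ε^3 := by positivity
  have h2a := mul_le_mul_of_nonneg_left hTle hT3
  have h2b := mul_le_mul_of_nonneg_right hε2 (by positivity : (0:ℝ) ≤ 2*ε^2*(q:ℝ)^2)
  have h2 : ε*T*ε^2 ≤ ε^2*(q:ℝ)^2 := by nlinarith [h2a, h2b]
  clear h2a h2b
  have h2' : ε^3*(q:ℝ)^2 ≤ ε*T*ε^2 := by
    have hy := mul_le_mul_of_nonneg_left hTge hT3
    linarith [hy]
  have h1 : ε*(q:ℝ)^2*(S - T) ≤ 0 :=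
    mul_nonpos_of_nonneg_of_nonpos (by positivity) (by linarith)
  have h1' : -(ε^3*(q:ℝ)^2) ≤ ε*(q:ℝ)^2*(S - T) := by
    have hx := mul_le_mul_of_nonneg_left hTS (by positivity : (0:ℝ) ≤ ε*(q:ℝ)^2)
    nlinarith [hx]
  have hApos : (0:ℝ) < (a:ℝ)*ε^2*(q:ℝ)^2 := by positivity
  have hAup : (a:ℝ)*ε^2*(q:ℝ)^2 ≤ ε^2*(q:ℝ)^3 := by
    nlinarith [mul_le_mul_of_nonneg_right haq' (by positivity : (0:ℝ) ≤ ε^2*(q:ℝ)^2)]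
  have hm1 : ε^2*(q:ℝ)^2 ≤ ε^2*(q:ℝ)^3 := by
    nlinarith [mul_le_mul_of_nonneg_left (pow_le_pow_right₀ hq1 (by norm_num : 2 ≤ 3))
      (sq_nonneg ε)]
  have hm0 : (0:ℝ) ≤ ε^2*(q:ℝ)^3 := by positivity
  have hm4 : (0:ℝ) ≤ ε^2*(q:ℝ)^4 := by positivity
  have hDmul := mul_le_mul_of_nonneg_left hD (by positivity : (0:ℝ) ≤ 10*ε^2*(q:ℝ)^2)
  constructor
  · have heq : ((a:ℝ) * ε ^ 2 / ((q : ℝ) ^ 2 - ε ^ 2) + ε / ((q : ℝ) ^ 2 - ε ^ 2) * S) -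
        ε * (T / (q:ℝ)^2) =
        ((a:ℝ)*ε^2*(q:ℝ)^2 + (ε*(q:ℝ)^2*(S - T) + ε*T*ε^2)) / (((q:ℝ)^2 - ε^2)*(q:ℝ)^2) := by
      field_simp; ring
    rw [hsqrt, heq, abs_div, abs_of_pos (mul_pos hDpos (by positivity : (0:ℝ) < (q:ℝ)^2)), div_le_div_iff₀ (mul_pos hDpos (by positivity : (0:ℝ) < (q:ℝ)^2)) hq0]
    have hNabs : |(a:ℝ)*ε^2*(q:ℝ)^2 + (ε*(q:ℝ)^2*(S - T) + ε*T*ε^2)| ≤ 2*ε^2*(q:ℝ)^3 := by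
      rw [abs_le]
      constructor
      · linarith [h1', h2', hApos, hm0]
      · linarith [h1, h2, hAup, hm1]
    have hfin := mul_le_mul_of_nonneg_right hNabs hq0.le
    linarith [hfin, hDmul, hm4]
  · have heq : (-((a:ℝ) * ε ^ 2) / ((q : ℝ) ^ 2 - ε ^ 2) + ε / ((q : ℝ) ^ 2 - ε ^ 2) * S) -
        ε * (T / (q:ℝ)^2) =
        (-((a:ℝ)*ε^2*(q:ℝ)^2) + (ε*(q:ℝ)^2*(S - T) + ε*T*ε^2)) / (((q:ℝ)^2 - ε^2)*(q:ℝ)^2) := by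
      field_simp; ring
    rw [hsqrt, heq, abs_div, abs_of_pos (mul_pos hDpos (by positivity : (0:ℝ) < (q:ℝ)^2)), div_le_div_iff₀ (mul_pos hDpos (by positivity : (0:ℝ) < (q:ℝ)^2)) hq0]
    have hNabs : |-((a:ℝ)*ε^2*(q:ℝ)^2) + (ε*(q:ℝ)^2*(S - T) + ε*T*ε^2)| ≤ 2*ε^2*(q:ℝ)^3 := by
      rw [abs_le]
      constructor
      · linarith [h1', h2', hAup, hm0]
      · linarith [h1, h2, hApos, hm1, hm0]
    have hfin := mul_le_mul_of_nonneg_right hNabs hq0.le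
    linarith [hfin, hDmul, hm4]
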